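/- arXiv:2411.11355 — 2 statements merged into one kernel-verified Lean document; each statement's English description precedes it below -/
import Mathlib

section
/- Let Λ ⊂ ℝ² be a lattice of rank 2 and let M be an m×2 real matrix of rank 2. Let x₁ ∈ Λ be a nonzero vector with |M x₁| = μ_M(Λ) := min{|Mx| : x ∈ Λ, x ≠ 0}. Then there exists x₂ ∈ Λ such that: (i) Λ = ℤx₁ + ℤx₂; (ii) for all r ∈ ℝ², |r₁ M x₁ + r₂ M x₂| is bounded above and below by constants, depending only on m, times |r₁||Mx₁| + |r₂||Mx₂|; (iii) |Mx₁|·|Mx₂| is bounded above and below by constants, depending only on m, times covol(Λ)·area(M[0,1]²), where M[0,1]² = {Mt : t ∈ [0,1]²} ⊂ ℝ^m, area denotes 2-dimensional Hausdorff measure, and covol(Λ) is the covolume of Λ. -/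
open MeasureTheory Real Matrix Finset

noncomputable section

/-- `e(x) = exp(2πix)`. -/
def e2pi (x : ℝ) : ℂ := Complex.exp (2 * Real.pi * Complex.I * x)

/-- Euclidean norm on `ℝ²`. -/
def nrm2 (x : ℝ × ℝ) : ℝ := Real.sqrt (x.1 ^ 2 + x.2 ^ 2)

/-- Dot product on `ℝ²`. -/
def dot2 (x y : ℝ × ℝ) : ℝ := x.1 * y.1 + x.2 * y.2

/-- `x^⊥ = (x₂, -x₁)`. -/
def perp2 (x : ℝ × ℝ) : ℝ × ℝ := (x.2, -x.1)

/-- `δ_n` for `n ∈ ℤ²`. -/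
def deltaInt (n : ℤ × ℤ) : ℂ := if n = 0 then 1 else 0

/-- `h(y,z) = Σ_{j ≥ 1} (1/(yj)) (ω(yj) − ω(|z|/(yj)))`. -/
def hFun (ω : ℝ → ℝ) (y z : ℝ) : ℝ :=
  ∑' j : ℕ+, (1 / (y * ((j : ℕ) : ℝ))) *
    (ω (y * ((j : ℕ) : ℝ)) - ω (|z| / (y * ((j : ℕ) : ℝ))))

/-- `c = (∫_{ℝ²} ω(|x|) dx)⁻¹`. -/
def cConst (ω : ℝ → ℝ) : ℝ := (∫ x : ℝ × ℝ, ω (nrm2 x))⁻¹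

/-- The function `p_{1,q}`. -/
def p1 (ω ω₀ : ℝ → ℝ) (Q : ℝ) (q : ℕ) (w : ℝ × ℝ) : ℂ :=
  -(cConst ω / Q : ℝ) * ∫ x : ℝ × ℝ,
    (((ω₀ (nrm2 x / Q ^ ((3 : ℝ) / 2)) *
      ∑' j : ℕ+, (1 / ((q : ℝ) * ((j : ℕ) : ℝ)) ^ 2) *
        ω (nrm2 x / (((j : ℕ) : ℝ) * (q : ℝ) * Q ^ ((1 : ℝ) / 2)))) : ℝ) : ℂ) *
      e2pi (-(dot2 w x))

/-- The function `p_{2,r,k,q}` (with `q` allowed to be a real parameter). -/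
def p2 (ω ω₀ : ℝ → ℝ) (Q : ℝ) (r : ℤ × ℤ) (k : ℕ) (q : ℝ) (w : ℝ × ℝ) : ℂ :=
  ((cConst ω / Q ^ 3 : ℝ) : ℂ) * ∫ x : ℝ × ℝ,
    (((ω₀ (nrm2 x / Q ^ ((3 : ℝ) / 2)) *
      hFun ω ((k : ℝ) * q / Q) (((r.1 : ℝ) * x.1 + (r.2 : ℝ) * x.2) / Q ^ 2)) : ℝ) : ℂ) *
      e2pi (-(dot2 w x))

/-- The lattice `Λ(a,q) = {k a + q y}` as a subset of `ℤ²`. -/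
def Lambda (a : ℤ × ℤ) (q : ℕ) : Set (ℤ × ℤ) :=
  {v | ∃ k : ℤ, ∃ y : ℤ × ℤ, v = (k * a.1 + (q : ℤ) * y.1, k * a.2 + (q : ℤ) * y.2)}

/-- `k(r) = gcd(r₁,r₂)/gcd(gcd(r₁,r₂),q)`. -/
def kOf (r : ℤ × ℤ) (q : ℕ) : ℕ := Int.gcd r.1 r.2 / Nat.gcd (Int.gcd r.1 r.2) q

/-- The function `p_{Λ(a,q)}`. -/
def pLambda (ω ω₀ : ℝ → ℝ) (Q : ℝ) (q : ℕ) (a : ℤ × ℤ) (w : ℝ × ℝ) : ℂ :=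
  p1 ω ω₀ Q q w +
    ∑' r : ℤ × ℤ,
      Set.indicator {r : ℤ × ℤ | r ∈ Lambda a q ∧ r ≠ 0}
        (fun r => ((ω (nrm2 ((r.1 : ℝ), (r.2 : ℝ)) / Q ^ ((1 : ℝ) / 2)) : ℝ) : ℂ) *
          p2 ω ω₀ Q r (kOf r q) (q : ℝ) w) r

/-- Reduced residues `a mod q` (canonical representatives) with `gcd(a₁,a₂,q)=1`. -/
def residues (q : ℕ) : Finset (ℕ × ℕ) :=
  ((Finset.range q) ×ˢ (Finset.range q)).filter (fun a => Nat.gcd (Nat.gcd a.1 a.2) q = 1)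

/-- Normalized directional derivative along `ξ`. -/
def dirDeriv (ξ : ℝ × ℝ) (f : ℝ × ℝ → ℂ) : ℝ × ℝ → ℂ :=
  fun w => fderiv ℝ f w (ξ.1 / nrm2 ξ, ξ.2 / nrm2 ξ)

/-- Fourier transform `ω̂₀(t) = ∫ ω₀(x) e(−xt) dx`. -/
def fourierW0 (ω₀ : ℝ → ℝ) (t : ℝ) : ℂ := ∫ x : ℝ, ((ω₀ x : ℝ) : ℂ) * e2pi (-(x * t))

/-- `|M(w)x|` for the 3×2 matrix `M(w)`. -/
def Mnorm (Q : ℝ) (w : ℝ × ℝ) (x : ℝ × ℝ) : ℝ :=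
  Real.sqrt (x.1 ^ 2 / Q + x.2 ^ 2 / Q + Q ^ 2 * (w.1 * x.2 - w.2 * x.1) ^ 2)

/-- `μ_{M(w)}(Λ(a,q))`: infimum of `|M(w)x|` over nonzero lattice points. -/
def muM (Q : ℝ) (w : ℝ × ℝ) (a : ℤ × ℤ) (q : ℕ) : ℝ :=
  sInf {t : ℝ | ∃ v : ℤ × ℤ, v ∈ Lambda a q ∧ v ≠ 0 ∧ t = Mnorm Q w ((v.1 : ℝ), (v.2 : ℝ))}

/-- Quadratic form attached to an integer matrix, over any commutative ring. -/
def quadEval {s : ℕ} {R : Type*} [CommRing R] (M : Matrix (Fin s) (Fin s) ℤ)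
    (x : Fin s → R) : R :=
  ∑ i, ∑ j, (M i j : R) * x i * x j

/-- `e_q(n) = exp(2πin/q)` for an integer `n`. -/
def eqc (q : ℕ) (n : ℤ) : ℂ := e2pi ((n : ℝ) / (q : ℝ))

/-- The exponential sum `D_q(u)`. -/
def Dq (s : ℕ) (M₁ M₂ : Matrix (Fin s) (Fin s) ℤ) (q : ℕ) (u : Fin s → ℤ) : ℂ :=
  ∑ a ∈ residues q, ∑ b ∈ Fintype.piFinset (fun _ : Fin s => Finset.range q),
    eqc q ((a.1 : ℤ) * quadEval M₁ (fun i => (b i : ℤ)) +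
      (a.2 : ℤ) * quadEval M₂ (fun i => (b i : ℤ)) + ∑ i, (b i : ℤ) * u i)

/-- The exponential sum `S_{q,dc}(u)`. -/
def Sq (s : ℕ) (M₁ M₂ : Matrix (Fin s) (Fin s) ℤ) (q d : ℕ) (c : ℤ × ℤ)
    (u : Fin s → ℤ) : ℂ :=
  ∑ a ∈ (residues q).filter
      (fun a => (q : ℤ) ∣ (d : ℤ) * (c.1 * (a.2 : ℤ) - c.2 * (a.1 : ℤ))),
    ∑ b ∈ Fintype.piFinset (fun _ : Fin s => Finset.range q),
      eqc q ((a.1 : ℤ) * quadEval M₁ (fun i => (b i : ℤ)) +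
        (a.2 : ℤ) * quadEval M₂ (fun i => (b i : ℤ)) + ∑ i, (b i : ℤ) * u i)

/-- The pair of quadratic forms given by `M₁, M₂` is nonsingular: at every nonzero
complex common zero the gradients (equivalently `M₁x`, `M₂x`) are linearly independent. -/
def NonsingularPair (s : ℕ) (M₁ M₂ : Matrix (Fin s) (Fin s) ℤ) : Prop :=
  ∀ x : Fin s → ℂ, x ≠ 0 →
    quadEval M₁ x = 0 → quadEval M₂ x = 0 →
    LinearIndependent ℂ
      ![(M₁.map (fun z : ℤ => (z : ℂ))).mulVec x, (M₂.map (fun z : ℤ => (z : ℂ))).mulVec x]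

/-- Euclidean norm on `Fin m → ℝ`. -/
def enorm' {m : ℕ} (v : Fin m → ℝ) : ℝ := Real.sqrt (∑ i, v i ^ 2)

end

/-- The set `{x = p b₁ + q b₂ : p,q ∈ ℤ}` generated by `b₁, b₂`. -/
def latticeOf (b₁ b₂ : Fin 2 → ℝ) : Set (Fin 2 → ℝ) :=
  {x | ∃ p q : ℤ, x = p • b₁ + q • b₂}

/-- The image `M[0,1]²` inside Euclidean space `ℝ^m`. -/
def parImage (m : ℕ) (M : Matrix (Fin m) (Fin 2) ℝ) : Set (EuclideanSpace ℝ (Fin m)) :=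
  (fun t : ℝ × ℝ => (WithLp.equiv 2 (Fin m → ℝ)).symm (M.mulVec ![t.1, t.2])) ''
    (Set.Icc (0 : ℝ) 1 ×ˢ Set.Icc (0 : ℝ) 1)


set_option maxHeartbeats 1000000

open scoped ENNReal NNReal

namespace S11aux

lemma mulVec_dot {k n : ℕ} (N : Matrix (Fin k) (Fin n) ℝ) (u v : Fin n → ℝ) :
    (N *ᵥ u) ⬝ᵥ (N *ᵥ v) = u ⬝ᵥ ((Nᵀ * N) *ᵥ v) := by
  rw [← Matrix.mulVec_mulVec]
  conv_rhs => rw [Matrix.dotProduct_mulVec, Matrix.vecMul_transpose]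

lemma dot_self_nonneg {n : ℕ} (v : Fin n → ℝ) : 0 ≤ v ⬝ᵥ v := by
  apply Finset.sum_nonneg; intro i _; exact mul_self_nonneg _

lemma dot_self_pos {n : ℕ} (v : Fin n → ℝ) (hv : v ≠ 0) : 0 < v ⬝ᵥ v := by
  rcases Function.ne_iff.mp hv with ⟨i, hi⟩
  have h : (0:ℝ) < v i * v i := by
    rcases (mul_self_nonneg (v i)).lt_or_eq with h | h
    · exact h
    · exact absurd (by nlinarith : v i = 0) hi
  exact Finset.sum_pos' (fun j _ => mul_self_nonneg _) ⟨i, Finset.mem_univ i, h⟩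

variable {m : ℕ}

def g (M : Matrix (Fin m) (Fin 2) ℝ) (u v : Fin 2 → ℝ) : ℝ := (M *ᵥ u) ⬝ᵥ (M *ᵥ v)

lemma g_symm (M : Matrix (Fin m) (Fin 2) ℝ) (u v : Fin 2 → ℝ) : g M u v = g M v u :=
  dotProduct_comm _ _

lemma g_nonneg (M : Matrix (Fin m) (Fin 2) ℝ) (u : Fin 2 → ℝ) : 0 ≤ g M u u :=
  dot_self_nonneg _

lemma g_pos {M : Matrix (Fin m) (Fin 2) ℝ} (hinj : ∀ u : Fin 2 → ℝ, M *ᵥ u = 0 → u = 0)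
    {u : Fin 2 → ℝ} (hu : u ≠ 0) : 0 < g M u u :=
  dot_self_pos _ (fun h => hu (hinj u h))

lemma enorm'_mulVec (M : Matrix (Fin m) (Fin 2) ℝ) (u : Fin 2 → ℝ) :
    enorm' (M *ᵥ u) = Real.sqrt (g M u u) := by
  unfold enorm' g; congr 1; simp [dotProduct, pow_two]

lemma g_expand (M : Matrix (Fin m) (Fin 2) ℝ) (a b c d : ℝ) (u v : Fin 2 → ℝ) :
    g M (a•u + b•v) (c•u + d•v) =
      a*c * g M u u + (a*d + b*c) * g M u v + b*d * g M v v := by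
  unfold g
  simp only [Matrix.mulVec_add, Matrix.mulVec_smul, dotProduct_add, add_dotProduct,
    smul_dotProduct, dotProduct_smul, smul_eq_mul]
  rw [dotProduct_comm (M *ᵥ v) (M *ᵥ u)]; ring

lemma g_smul (M : Matrix (Fin m) (Fin 2) ℝ) (a : ℝ) (u : Fin 2 → ℝ) :
    g M (a • u) (a • u) = a ^ 2 * g M u u := by
  unfold g
  simp only [Matrix.mulVec_smul, smul_dotProduct, dotProduct_smul, smul_eq_mul]; ring

lemma g_sub_smul (M : Matrix (Fin m) (Fin 2) ℝ) (a : ℝ) (u v : Fin 2 → ℝ) :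
    g M u (v - a • u) = g M u v - a * g M u u := by
  unfold g
  simp only [Matrix.mulVec_sub, Matrix.mulVec_smul, dotProduct_sub, dotProduct_smul,
    smul_eq_mul]

lemma g_coord (M : Matrix (Fin m) (Fin 2) ℝ) (u v : Fin 2 → ℝ) :
    g M u v = u 0 * ((Mᵀ*M) 0 0 * v 0 + (Mᵀ*M) 0 1 * v 1)
      + u 1 * ((Mᵀ*M) 1 0 * v 0 + (Mᵀ*M) 1 1 * v 1) := by
  unfold g; rw [mulVec_dot]
  simp [dotProduct, Matrix.mulVec, Fin.sum_univ_two]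

lemma gram_det (M : Matrix (Fin m) (Fin 2) ℝ) (u v : Fin 2 → ℝ) :
    g M u u * g M v v - g M u v ^ 2 = (u 0 * v 1 - u 1 * v 0)^2 * (Mᵀ*M).det := by
  have hsym : (Mᵀ*M) 1 0 = (Mᵀ*M) 0 1 := by
    have h : (Mᵀ*M)ᵀ = Mᵀ*M := by rw [Matrix.transpose_mul, Matrix.transpose_transpose]
    exact (congrFun (congrFun h.symm 1) 0)
  rw [Matrix.det_fin_two, g_coord, g_coord, g_coord, hsym]; ring

instance hausdorffHaar2 :
    (μH[2] : Measure (EuclideanSpace ℝ (Fin 2))).IsAddHaarMeasure := by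
  have h := MeasureTheory.isAddHaarMeasure_hausdorffMeasure (E := EuclideanSpace ℝ (Fin 2))
  simpa using h

open scoped MatrixOrder in
lemma measure_parImage (m : ℕ) (M : Matrix (Fin m) (Fin 2) ℝ)
    (hinj : ∀ u : Fin 2 → ℝ, M *ᵥ u = 0 → u = 0) :
    ∃ S : Matrix (Fin 2) (Fin 2) ℝ, S * S = Mᵀ * M ∧
      μH[2] (parImage m M) =
        (Measure.addHaarScalarFactor (μH[2] : Measure (EuclideanSpace ℝ (Fin 2))) volume : ℝ≥0∞)
          * ENNReal.ofReal |S.det| := by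
  classical
  have hG : (Mᵀ * M).PosSemidef := by
    have h := Matrix.posSemidef_conjTranspose_mul_self M
    rwa [Matrix.conjTranspose_eq_transpose_of_trivial] at h
  refine ⟨CFC.sqrt (Mᵀ * M), CFC.sqrt_mul_sqrt_self _ hG.nonneg, ?_⟩
  set S := CFC.sqrt (Mᵀ * M) with hSdef
  have hSS : S * S = Mᵀ * M := CFC.sqrt_mul_sqrt_self _ hG.nonneg
  have hSt : Sᵀ = S := by
    have h2 : Sᴴ = S := (CFC.sqrt_nonneg (Mᵀ * M)).posSemidef.1
    rwa [Matrix.conjTranspose_eq_transpose_of_trivial] at h2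
  have hwe : ∀ (N : Matrix (Fin 2) (Fin 2) ℝ) (v : EuclideanSpace ℝ (Fin 2)) (i : Fin 2),
      (Matrix.toEuclideanLin N v) i = (N *ᵥ (WithLp.equiv 2 (Fin 2 → ℝ) v)) i := fun _ _ _ => rfl
  have hkey : ∀ v : EuclideanSpace ℝ (Fin 2),
      ‖Matrix.toEuclideanLin M v‖ = ‖Matrix.toEuclideanLin S v‖ := by
    intro v
    rw [EuclideanSpace.norm_eq, EuclideanSpace.norm_eq]
    congr 1
    have h1 : ∀ i, ‖(Matrix.toEuclideanLin M v) i‖ ^ 2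
        = (M *ᵥ (WithLp.equiv 2 (Fin 2 → ℝ) v)) i ^2 := by
      intro i; rw [Real.norm_eq_abs, sq_abs]; rfl
    have h2 : ∀ i, ‖(Matrix.toEuclideanLin S v) i‖ ^ 2
        = (S *ᵥ (WithLp.equiv 2 (Fin 2 → ℝ) v)) i ^2 := by
      intro i; rw [Real.norm_eq_abs, sq_abs]; rw [hwe]
    simp only [h1, h2]
    set w := WithLp.equiv 2 (Fin 2 → ℝ) v
    have e1 : ∑ i, (M *ᵥ w) i ^ 2 = (M *ᵥ w) ⬝ᵥ (M *ᵥ w) := by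
      simp [dotProduct, pow_two]
    have e2 : ∑ i, (S *ᵥ w) i ^ 2 = (S *ᵥ w) ⬝ᵥ (S *ᵥ w) := by
      simp [dotProduct, pow_two]
    rw [e1, e2, mulVec_dot, mulVec_dot, hSt, hSS]
  have hψinj : Function.Injective (Matrix.toEuclideanLin S) := by
    rw [← LinearMap.ker_eq_bot, LinearMap.ker_eq_bot']
    intro v hv
    have h0 : ‖Matrix.toEuclideanLin M v‖ = 0 := by rw [hkey, hv, norm_zero]
    have h1 : Matrix.toEuclideanLin M v = 0 := norm_eq_zero.mp h0
    have h2 : M *ᵥ (WithLp.equiv 2 (Fin 2 → ℝ) v) = 0 := by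
      funext i; exact congrFun (congrArg (WithLp.equiv 2 (Fin m → ℝ)) h1) i
    have h3 : (WithLp.equiv 2 (Fin 2 → ℝ)) v = 0 := hinj _ h2
    simpa using congrArg (WithLp.equiv 2 (Fin 2 → ℝ)).symm h3
  have hψsurj : Function.Surjective (Matrix.toEuclideanLin S) :=
    LinearMap.injective_iff_surjective.mp hψinj
  set ψe : EuclideanSpace ℝ (Fin 2) ≃ₗ[ℝ] EuclideanSpace ℝ (Fin 2) :=
    LinearEquiv.ofBijective (Matrix.toEuclideanLin S) ⟨hψinj, hψsurj⟩ with hψe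
  set ι : EuclideanSpace ℝ (Fin 2) →ₗᵢ[ℝ] EuclideanSpace ℝ (Fin m) :=
    { toLinearMap := (Matrix.toEuclideanLin M).comp ψe.symm.toLinearMap,
      norm_map' := by
        intro v
        have h1 : ψe (ψe.symm v) = v := ψe.apply_symm_apply v
        have h2 : Matrix.toEuclideanLin S (ψe.symm v) = v := h1
        calc ‖(Matrix.toEuclideanLin M) (ψe.symm v)‖
            = ‖Matrix.toEuclideanLin S (ψe.symm v)‖ := hkey _
          _ = ‖v‖ := by rw [h2] } with hι
  set T : Set (EuclideanSpace ℝ (Fin 2)) :=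
    (fun t : ℝ × ℝ => (WithLp.equiv 2 (Fin 2 → ℝ)).symm ![t.1, t.2]) ''
      (Set.Icc (0 : ℝ) 1 ×ˢ Set.Icc (0 : ℝ) 1) with hT
  have himg1 : parImage m M = (Matrix.toEuclideanLin M) '' T := by
    rw [hT, parImage, Set.image_image]
    exact Set.image_congr
      (fun t _ => (Matrix.toEuclideanLin_apply_piLp_toLp M ![t.1, t.2]).symm)
  have himg2 : (Matrix.toEuclideanLin M) '' T = ι '' (ψe '' T) := by
    conv_rhs => rw [← Set.image_comp]
    apply Set.image_congr
    intro x _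
    show _ = (Matrix.toEuclideanLin M) (ψe.symm (ψe x))
    rw [ψe.symm_apply_apply]
  have hmeas1 : μH[2] (ι '' (ψe '' T)) = μH[2] (ψe '' T) :=
    ι.isometry.hausdorffMeasure_image (Or.inl (by norm_num)) _
  have hμH2 : (μH[2] : Measure (EuclideanSpace ℝ (Fin 2))) =
      (Measure.addHaarScalarFactor (μH[2] : Measure (EuclideanSpace ℝ (Fin 2))) volume) • volume :=
    Measure.isAddLeftInvariant_eq_smul _ _
  have hdet : LinearMap.det (Matrix.toEuclideanLin S) = S.det := by
    rw [Matrix.toEuclideanLin_eq_toLin, LinearMap.det_toLin]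
  have hvolT : (volume : Measure (EuclideanSpace ℝ (Fin 2))) T = 1 := by
    have hP : (fun t : ℝ × ℝ => ![t.1, t.2]) '' (Set.Icc (0 : ℝ) 1 ×ˢ Set.Icc (0 : ℝ) 1)
        = Set.univ.pi (fun _ : Fin 2 => Set.Icc (0:ℝ) 1) := by
      ext v; constructor
      · rintro ⟨t, ⟨ht1, ht2⟩, rfl⟩
        intro i _; fin_cases i <;> simpa
      · intro hv
        refine ⟨(v 0, v 1), ⟨hv 0 (Set.mem_univ _), hv 1 (Set.mem_univ _)⟩, ?_⟩
        funext i; fin_cases i <;> rfl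
    have hT' : T = (WithLp.equiv 2 (Fin 2 → ℝ)) ⁻¹'
        (Set.univ.pi (fun _ : Fin 2 => Set.Icc (0:ℝ) 1)) := by
      rw [hT, ← Set.image_image, hP, Equiv.image_eq_preimage_symm]
      simp
    rw [hT']
    rw [show ⇑(WithLp.equiv 2 (Fin 2 → ℝ)) = WithLp.ofLp from rfl]
    rw [(PiLp.volume_preserving_ofLp (Fin 2)).measure_preimage
      ((MeasurableSet.univ_pi (fun _ => measurableSet_Icc)).nullMeasurableSet)]
    rw [volume_pi_pi]
    simp [Real.volume_Icc]
  have hvol2 : (volume : Measure (EuclideanSpace ℝ (Fin 2))) (ψe '' T)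
      = ENNReal.ofReal |S.det| := by
    have h : ψe '' T = (Matrix.toEuclideanLin S) '' T := rfl
    rw [h, Measure.addHaar_image_linearMap, hdet, hvolT, mul_one]
  rw [himg1, himg2, hmeas1]
  conv_lhs => rw [hμH2]
  rw [Measure.smul_apply, hvol2, ENNReal.smul_def, smul_eq_mul]

lemma abs_half_sq (c a : ℝ) (h : |c| ≤ a/2) : c^2 ≤ (a/2)^2 := by
  nlinarith [sq_abs c, abs_nonneg c]

lemma sq_le_imp (x y : ℝ) (hx : 0 ≤ x) (hy : 0 ≤ y) (h : x^2 ≤ y^2) : x ≤ y := by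
  calc x = Real.sqrt (x^2) := (Real.sqrt_sq hx).symm
    _ ≤ Real.sqrt (y^2) := Real.sqrt_le_sqrt h
    _ = y := Real.sqrt_sq hy

lemma gram_le (a b c : ℝ) (ha : 0 < a) (hab : a ≤ b) (hc2 : c^2 ≤ (a/2)^2) :
    a*b ≤ 4*(a*b - c^2) := by
  nlinarith [mul_le_mul_of_nonneg_left hab ha.le]

lemma d2_contr (d gg gg' : ℝ) (hgeq : gg = d^2*gg') (hle : gg ≤ gg') (hg' : 0 < gg')
    (hd : 2 ≤ d) : False := by
  nlinarith [mul_nonneg (mul_nonneg (by linarith : (0:ℝ) ≤ d - 2) (by linarith : (0:ℝ) ≤ d - 2)) hg'.le,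
    mul_nonneg (by linarith : (0:ℝ) ≤ d - 2) hg'.le]

lemma key_lower (r1 r2 A B c : ℝ) (hA : 0 ≤ A) (hB : 0 ≤ B) (hAB : A ≤ B)
    (hc : |c| ≤ A^2/2) :
    ((|r1| * A + |r2| * B)/2)^2 ≤ r1^2*A^2 + 2*r1 * r2 * c + r2^2*B^2 := by
  have hs : 0 ≤ |r1| := abs_nonneg _
  have ht : 0 ≤ |r2| := abs_nonneg _
  have h1 : |r1 * r2 * c| ≤ |r1| * |r2| * (A^2/2) := by
    rw [abs_mul, abs_mul]
    exact mul_le_mul_of_nonneg_left hc (by positivity)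
  have h2 : -(|r1| * |r2| * (A^2/2)) ≤ r1 * r2 * c := by linarith [neg_abs_le (r1 * r2 * c)]
  have hr1 : r1^2 = |r1|^2 := (sq_abs r1).symm
  have hr2 : r2^2 = |r2|^2 := (sq_abs r2).symm
  nlinarith [sq_nonneg (|r1| * A - |r2| * B),
    mul_nonneg (mul_nonneg hs ht) (mul_nonneg hA (sub_nonneg.mpr hAB))]

lemma key_upper (r1 r2 A B c : ℝ) (hA : 0 ≤ A) (hB : 0 ≤ B) (hAB : A ≤ B)
    (hc : |c| ≤ A^2/2) :
    r1^2*A^2 + 2*r1 * r2 * c + r2^2*B^2 ≤ (|r1| * A + |r2| * B)^2 := by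
  have hs : 0 ≤ |r1| := abs_nonneg _
  have ht : 0 ≤ |r2| := abs_nonneg _
  have h1 : |r1 * r2 * c| ≤ |r1| * |r2| * (A^2/2) := by
    rw [abs_mul, abs_mul]
    exact mul_le_mul_of_nonneg_left hc (by positivity)
  have h3 : r1 * r2 * c ≤ |r1| * |r2| * (A^2/2) := (le_abs_self _).trans h1
  have hr1 : r1^2 = |r1|^2 := (sq_abs r1).symm
  have hr2 : r2^2 = |r2|^2 := (sq_abs r2).symm
  nlinarith [mul_nonneg (mul_nonneg hs ht) (mul_nonneg hA (sub_nonneg.mpr hAB)),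
    mul_nonneg (mul_nonneg hs ht) (mul_nonneg hA hB)]

end S11aux

open S11aux


/-- reduced basis of a rank-2 lattice adapted to a full-rank `m×2` matrix
(Lemma 4.2 / Maynard's geometry-of-numbers lemma). -/
theorem statement11 (m : ℕ) :
    ∃ K : ℝ, 0 < K ∧
      ∀ b₁ b₂ : Fin 2 → ℝ, LinearIndependent ℝ ![b₁, b₂] →
      ∀ M : Matrix (Fin m) (Fin 2) ℝ, M.rank = 2 →
      ∀ x₁ : Fin 2 → ℝ, x₁ ∈ latticeOf b₁ b₂ → x₁ ≠ 0 →
        (∀ x : Fin 2 → ℝ, x ∈ latticeOf b₁ b₂ → x ≠ 0 →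
          enorm' (M.mulVec x₁) ≤ enorm' (M.mulVec x)) →
      ∃ x₂ : Fin 2 → ℝ, x₂ ∈ latticeOf b₁ b₂ ∧
        (∀ x : Fin 2 → ℝ, x ∈ latticeOf b₁ b₂ ↔ ∃ p q : ℤ, x = p • x₁ + q • x₂) ∧
        (∀ r : ℝ × ℝ,
          K⁻¹ * (|r.1| * enorm' (M.mulVec x₁) + |r.2| * enorm' (M.mulVec x₂)) ≤
              enorm' (r.1 • M.mulVec x₁ + r.2 • M.mulVec x₂) ∧
            enorm' (r.1 • M.mulVec x₁ + r.2 • M.mulVec x₂) ≤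
              K * (|r.1| * enorm' (M.mulVec x₁) + |r.2| * enorm' (M.mulVec x₂))) ∧
        (K⁻¹ * (|b₁ 0 * b₂ 1 - b₁ 1 * b₂ 0| * (μH[2] (parImage m M)).toReal) ≤
            enorm' (M.mulVec x₁) * enorm' (M.mulVec x₂) ∧
          enorm' (M.mulVec x₁) * enorm' (M.mulVec x₂) ≤
            K * (|b₁ 0 * b₂ 1 - b₁ 1 * b₂ 0| * (μH[2] (parImage m M)).toReal)) := by
  classical
  set κ : ℝ≥0 :=
    Measure.addHaarScalarFactor (μH[2] : Measure (EuclideanSpace ℝ (Fin 2))) volume with hκdef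
  have hκpos : 0 < (κ : ℝ) := by
    have h := Measure.addHaarScalarFactor_pos_of_isAddHaarMeasure
      (μH[2] : Measure (EuclideanSpace ℝ (Fin 2))) volume
    exact_mod_cast h
  set c0 : ℝ := (κ : ℝ) with hc0def
  set K : ℝ := 2 * (c0 + c0⁻¹ + 1) with hKdef
  have hc0inv : 0 < c0⁻¹ := by positivity
  have hK0 : 0 < K := by positivity
  have hK2 : 2 ≤ K := by nlinarith
  have hKc0 : c0 ≤ K := by nlinarith
  have hKK : K * K⁻¹ = 1 := mul_inv_cancel₀ hK0.ne'
  have hKinv0 : 0 ≤ K⁻¹ := by positivity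
  have hKinvhalf : K⁻¹ ≤ 1 / 2 := by nlinarith
  have hKc0' : 2 ≤ K * c0 := by
    have h := mul_inv_cancel₀ hκpos.ne'
    nlinarith
  refine ⟨K, hK0, ?_⟩
  intro b₁ b₂ hb M hrank x₁ hx₁mem hx₁ne hmin
  -- injectivity of M
  have hMinj : ∀ u : Fin 2 → ℝ, M *ᵥ u = 0 → u = 0 := by
    have h2 : Module.finrank ℝ (LinearMap.range M.mulVecLin) = 2 := hrank
    have hker : LinearMap.ker M.mulVecLin = ⊥ := by
      have h1 := LinearMap.finrank_range_add_finrank_ker M.mulVecLin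
      rw [h2, show Module.finrank ℝ (Fin 2 → ℝ) = 2 by simp] at h1
      have h3 : Module.finrank ℝ (LinearMap.ker M.mulVecLin) = 0 := by omega
      exact Submodule.finrank_eq_zero.mp h3
    intro u hu
    have h4 : M.mulVecLin u = M.mulVecLin 0 := by
      simpa [Matrix.mulVecLin_apply, Matrix.mulVec_zero] using hu
    exact LinearMap.ker_eq_bot.mp hker h4
  -- generic helpers
  have hzsmul : ∀ (p : ℤ) (x : Fin 2 → ℝ), p • x = (p:ℝ) • x :=
    fun p x => (Int.cast_smul_eq_zsmul ℝ p x).symm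
  have hmem : ∀ p q : ℤ, ((p:ℝ) • b₁ + (q:ℝ) • b₂) ∈ latticeOf b₁ b₂ :=
    fun p q => ⟨p, q, by rw [hzsmul, hzsmul]⟩
  have hbpair : ∀ s t : ℝ, s • b₁ + t • b₂ = 0 → s = 0 ∧ t = 0 :=
    fun s t hst => (LinearIndependent.pair_iff.mp hb) s t hst
  obtain ⟨p, q, hpq⟩ := hx₁mem
  have hx₁ : x₁ = (p:ℝ) • b₁ + (q:ℝ) • b₂ := by rw [hpq, hzsmul, hzsmul]
  have hming : ∀ x ∈ latticeOf b₁ b₂, x ≠ 0 → g M x₁ x₁ ≤ g M x x := by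
    intro x hx hx0
    have h := hmin x hx hx0
    rw [enorm'_mulVec, enorm'_mulVec] at h
    calc g M x₁ x₁ = Real.sqrt (g M x₁ x₁)^2 := (Real.sq_sqrt (g_nonneg M x₁)).symm
      _ ≤ Real.sqrt (g M x x)^2 := pow_le_pow_left₀ (Real.sqrt_nonneg _) h 2
      _ = g M x x := Real.sq_sqrt (g_nonneg M x)
  -- primitivity
  have hgcd : Int.gcd p q = 1 := by
    by_contra hne
    have hd0 : Int.gcd p q ≠ 0 := by
      intro h0
      obtain ⟨hp0, hq0⟩ := Int.gcd_eq_zero_iff.mp h0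
      exact hx₁ne (by rw [hx₁, hp0, hq0]; simp)
    obtain ⟨p', hp'⟩ := (Int.gcd_dvd_left p q : ((Int.gcd p q : ℤ)) ∣ p)
    obtain ⟨q', hq'⟩ := (Int.gcd_dvd_right p q : ((Int.gcd p q : ℤ)) ∣ q)
    set d : ℤ := (Int.gcd p q : ℤ) with hddef
    set x' : Fin 2 → ℝ := (p':ℝ) • b₁ + (q':ℝ) • b₂ with hx'
    have hx1x' : x₁ = (d:ℝ) • x' := by
      rw [hx₁, hx', hp', hq']; push_cast; module
    have hx'0 : x' ≠ 0 := by
      intro h0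
      exact hx₁ne (by rw [hx1x', h0, smul_zero])
    have hgx' : 0 < g M x' x' := g_pos hMinj hx'0
    have hgeq : g M x₁ x₁ = (d:ℝ)^2 * g M x' x' := by
      rw [hx1x', g_smul]
    have hle := hming x' (hmem p' q') hx'0
    have hd2 : (2:ℝ) ≤ (d:ℝ) := by
      have h22 : (2:ℤ) ≤ d := by
        rw [hddef]
        have : 2 ≤ Int.gcd p q := by omega
        exact_mod_cast this
      exact_mod_cast h22
    exact d2_contr _ _ _ hgeq hle hgx' hd2
  -- Bezout
  obtain ⟨a', b', hab⟩ := Int.isCoprime_iff_gcd_eq_one.mpr hgcd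
  set s : ℤ := -b' with hs
  set t : ℤ := a' with ht
  have hdet1 : p * t - q * s = 1 := by rw [hs, ht]; linarith [hab]
  have hdetR : (p:ℝ) * (t:ℝ) - (q:ℝ) * (s:ℝ) = 1 := by exact_mod_cast hdet1
  set y : Fin 2 → ℝ := (s:ℝ) • b₁ + (t:ℝ) • b₂ with hy
  have hymem : y ∈ latticeOf b₁ b₂ := hmem s t
  have hspan : ∀ x, x ∈ latticeOf b₁ b₂ ↔ ∃ a b : ℤ, x = (a:ℝ) • x₁ + (b:ℝ) • y := by
    intro x; constructor
    · rintro ⟨u, v, rfl⟩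
      refine ⟨u * t - v * s, v * p - u * q, ?_⟩
      rw [hzsmul, hzsmul, hx₁, hy]; push_cast
      funext i
      simp only [Pi.add_apply, Pi.smul_apply, smul_eq_mul]
      linear_combination (-(u:ℝ) * b₁ i - (v:ℝ) * b₂ i) * hdetR
    · rintro ⟨a, b, rfl⟩
      refine ⟨a * p + b * s, a * q + b * t, ?_⟩
      rw [hzsmul, hzsmul, hx₁, hy]; push_cast; module
  -- reduction step
  have hA2pos : 0 < g M x₁ x₁ := g_pos hMinj hx₁ne
  set n : ℤ := round (g M x₁ y / g M x₁ x₁) with hn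
  set x₂ : Fin 2 → ℝ := y - (n:ℝ) • x₁ with hx₂def
  have hx₂eq : x₂ = ((s:ℝ) - (n:ℝ)*(p:ℝ)) • b₁ + ((t:ℝ) - (n:ℝ)*(q:ℝ)) • b₂ := by
    rw [hx₂def, hy, hx₁]; module
  have hx₂mem : x₂ ∈ latticeOf b₁ b₂ := by
    refine ⟨s - n * p, t - n * q, ?_⟩
    rw [hzsmul, hzsmul, hx₂eq]; push_cast; rfl
  have hx₂ne : x₂ ≠ 0 := by
    intro h0
    have h1 : ((s:ℝ) - (n:ℝ)*(p:ℝ)) = 0 ∧ ((t:ℝ) - (n:ℝ)*(q:ℝ)) = 0 := by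
      apply hbpair; rw [← hx₂eq]; exact h0
    have hs' : (s:ℝ) = (n:ℝ)*(p:ℝ) := by linarith [h1.1]
    have ht' : (t:ℝ) = (n:ℝ)*(q:ℝ) := by linarith [h1.2]
    rw [hs', ht'] at hdetR
    exact zero_ne_one (by linear_combination hdetR : (0:ℝ) = 1)
  have hspan2 : ∀ x, x ∈ latticeOf b₁ b₂ ↔ ∃ a b : ℤ, x = a • x₁ + b • x₂ := by
    intro x
    rw [hspan]
    constructor
    · rintro ⟨a, b, rfl⟩
      refine ⟨a + b * n, b, ?_⟩
      rw [hzsmul, hzsmul, hx₂def]; push_cast; module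
    · rintro ⟨a, b, rfl⟩
      refine ⟨a + b * (-n), b, ?_⟩
      rw [hzsmul, hzsmul, hx₂def]; push_cast; module
  -- inner product bounds
  have hc : |g M x₁ x₂| ≤ g M x₁ x₁ / 2 := by
    have habs := abs_sub_round (g M x₁ y / g M x₁ x₁)
    have hceq : g M x₁ x₂ = g M x₁ y - (n:ℝ) * g M x₁ x₁ := by
      rw [hx₂def, g_sub_smul]
    have heq2 : g M x₁ y - (n:ℝ) * g M x₁ x₁
        = (g M x₁ y / g M x₁ x₁ - (n:ℝ)) * g M x₁ x₁ := by
      field_simp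
    rw [hceq, heq2, abs_mul, abs_of_pos hA2pos]
    calc |g M x₁ y / g M x₁ x₁ - (n:ℝ)| * g M x₁ x₁ ≤ (1/2) * g M x₁ x₁ := by
          apply mul_le_mul_of_nonneg_right _ hA2pos.le
          rw [hn]; exact habs
      _ = g M x₁ x₁ / 2 := by ring
  have hB2pos : 0 < g M x₂ x₂ := g_pos hMinj hx₂ne
  have hA2B2 : g M x₁ x₁ ≤ g M x₂ x₂ := hming x₂ hx₂mem hx₂ne
  set A : ℝ := Real.sqrt (g M x₁ x₁) with hAdef
  set B : ℝ := Real.sqrt (g M x₂ x₂) with hBdef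
  have hA0 : 0 ≤ A := Real.sqrt_nonneg _
  have hB0 : 0 ≤ B := Real.sqrt_nonneg _
  have hAsq : A ^ 2 = g M x₁ x₁ := Real.sq_sqrt hA2pos.le
  have hBsq : B ^ 2 = g M x₂ x₂ := Real.sq_sqrt hB2pos.le
  have hAB : A ≤ B := Real.sqrt_le_sqrt hA2B2
  have hE1 : enorm' (M.mulVec x₁) = A := by rw [enorm'_mulVec, hAdef]
  have hE2 : enorm' (M.mulVec x₂) = B := by rw [enorm'_mulVec, hBdef]
  refine ⟨x₂, hx₂mem, hspan2, ?_, ?_⟩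
  · -- part (ii)
    intro r
    have hz : r.1 • M.mulVec x₁ + r.2 • M.mulVec x₂ = M *ᵥ (r.1 • x₁ + r.2 • x₂) := by
      rw [Matrix.mulVec_add, Matrix.mulVec_smul, Matrix.mulVec_smul]
    have hgz : g M (r.1 • x₁ + r.2 • x₂) (r.1 • x₁ + r.2 • x₂)
        = r.1^2 * g M x₁ x₁ + 2*r.1*r.2 * g M x₁ x₂ + r.2^2 * g M x₂ x₂ := by
      rw [g_expand]; ring
    have hrc1 : r.1 * r.2 * g M x₁ x₂ ≤ |r.1| * |r.2| * (g M x₁ x₁ / 2) := by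
      calc r.1 * r.2 * g M x₁ x₂ ≤ |r.1 * r.2 * g M x₁ x₂| := le_abs_self _
        _ = |r.1| * |r.2| * |g M x₁ x₂| := by rw [abs_mul, abs_mul]
        _ ≤ |r.1| * |r.2| * (g M x₁ x₁ / 2) := by
            apply mul_le_mul_of_nonneg_left hc (by positivity)
    have hrc2 : -(|r.1| * |r.2| * (g M x₁ x₁ / 2)) ≤ r.1 * r.2 * g M x₁ x₂ := by
      have h1 : |r.1 * r.2 * g M x₁ x₂| ≤ |r.1| * |r.2| * (g M x₁ x₁ / 2) := by
        rw [abs_mul, abs_mul]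
        apply mul_le_mul_of_nonneg_left hc (by positivity)
      linarith [neg_abs_le (r.1 * r.2 * g M x₁ x₂)]
    have hs1 : (0:ℝ) ≤ |r.1| := abs_nonneg _
    have hs2 : (0:ℝ) ≤ |r.2| := abs_nonneg _
    have hr1sq : r.1^2 = |r.1|^2 := (sq_abs r.1).symm
    have hr2sq : r.2^2 = |r.2|^2 := (sq_abs r.2).symm
    rw [hE1, hE2, hz, enorm'_mulVec, hgz]
    have hcA : |g M x₁ x₂| ≤ A^2/2 := by rw [hAsq]; exact hc
    have hqnn : 0 ≤ r.1^2 * g M x₁ x₁ + 2*r.1*r.2 * g M x₁ x₂ + r.2^2 * g M x₂ x₂ := by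
      rw [← hgz]; exact g_nonneg M _
    constructor
    · have hlow : ((|r.1| * A + |r.2| * B)/2)^2
          ≤ r.1^2 * g M x₁ x₁ + 2*r.1*r.2 * g M x₁ x₂ + r.2^2 * g M x₂ x₂ := by
        have h := key_lower r.1 r.2 A B (g M x₁ x₂) hA0 hB0 hAB hcA
        rw [hAsq, hBsq] at h
        exact h
      have h1 : (|r.1| * A + |r.2| * B)/2
          ≤ Real.sqrt (r.1^2 * g M x₁ x₁ + 2*r.1*r.2 * g M x₁ x₂ + r.2^2 * g M x₂ x₂) := by
        rw [Real.le_sqrt (by positivity) hqnn]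
        exact hlow
      calc K⁻¹ * (|r.1| * A + |r.2| * B) ≤ (1/2) * (|r.1| * A + |r.2| * B) := by
            apply mul_le_mul_of_nonneg_right hKinvhalf (by positivity)
        _ = (|r.1| * A + |r.2| * B)/2 := by ring
        _ ≤ _ := h1
    · have hup : r.1^2 * g M x₁ x₁ + 2*r.1*r.2 * g M x₁ x₂ + r.2^2 * g M x₂ x₂
          ≤ (|r.1| * A + |r.2| * B)^2 := by
        have h := key_upper r.1 r.2 A B (g M x₁ x₂) hA0 hB0 hAB hcA
        rw [hAsq, hBsq] at h
        exact h
      calc Real.sqrt (r.1^2 * g M x₁ x₁ + 2*r.1*r.2 * g M x₁ x₂ + r.2^2 * g M x₂ x₂)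
          ≤ Real.sqrt ((|r.1| * A + |r.2| * B)^2) := Real.sqrt_le_sqrt hup
        _ = |r.1| * A + |r.2| * B := Real.sqrt_sq (by positivity)
        _ ≤ K * (|r.1| * A + |r.2| * B) := by
            nlinarith [mul_nonneg hs1 hA0, mul_nonneg hs2 hB0]
  · -- part (iii)
    obtain ⟨S, hSS, hμ⟩ := measure_parImage m M hMinj
    have hH : (μH[2] (parImage m M)).toReal = c0 * |S.det| := by
      rw [hμ, ENNReal.toReal_mul, ← hκdef, ENNReal.coe_toReal,
        ENNReal.toReal_ofReal (abs_nonneg _)]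
    have hdetP : x₁ 0 * x₂ 1 - x₁ 1 * x₂ 0 = b₁ 0 * b₂ 1 - b₁ 1 * b₂ 0 := by
      rw [hx₁, hx₂eq]
      simp only [Pi.add_apply, Pi.smul_apply, smul_eq_mul]
      linear_combination (b₁ 0 * b₂ 1 - b₁ 1 * b₂ 0) * hdetR
    have hdetS : S.det * S.det = (Mᵀ*M).det := by rw [← Matrix.det_mul, hSS]
    have hgram := gram_det M x₁ x₂
    set Y : ℝ := |b₁ 0 * b₂ 1 - b₁ 1 * b₂ 0| * |S.det| with hYdef
    have hY0 : 0 ≤ Y := by rw [hYdef]; positivity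
    have hYsq : Y^2 = g M x₁ x₁ * g M x₂ x₂ - g M x₁ x₂ ^ 2 := by
      rw [hYdef, mul_pow, sq_abs, sq_abs, ← hdetP, pow_two S.det, hdetS]
      exact hgram.symm
    have hccsq : g M x₁ x₂ ^ 2 ≤ (g M x₁ x₁ / 2)^2 := abs_half_sq _ _ hc
    have hABsq : (A*B)^2 = g M x₁ x₁ * g M x₂ x₂ := by rw [mul_pow, hAsq, hBsq]
    have hABpos : 0 < A * B := by
      have hA0' : 0 < A := Real.sqrt_pos.mpr hA2pos
      have hB0' : 0 < B := Real.sqrt_pos.mpr hB2pos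
      positivity
    have hY_le : Y ≤ A * B := by
      refine sq_le_imp _ _ hY0 hABpos.le ?_
      rw [hYsq, hABsq]
      linarith [sq_nonneg (g M x₁ x₂)]
    have hAB_le : A * B ≤ 2 * Y := by
      refine sq_le_imp _ _ hABpos.le (by linarith) ?_
      have h4 : (2*Y)^2 = 4*(g M x₁ x₁ * g M x₂ x₂ - g M x₁ x₂ ^ 2) := by
        rw [mul_pow, hYsq]; ring
      rw [hABsq, h4]
      exact gram_le _ _ _ hA2pos hA2B2 hccsq
    have hre : |b₁ 0 * b₂ 1 - b₁ 1 * b₂ 0| * (c0 * |S.det|) = c0 * Y := by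
      rw [hYdef]; ring
    rw [hE1, hE2, hH, hre]
    have hKinvK : K⁻¹ * K = 1 := inv_mul_cancel₀ hK0.ne'
    constructor
    · calc K⁻¹ * (c0 * Y) = (K⁻¹ * c0) * Y := by ring
        _ ≤ 1 * Y := by
            apply mul_le_mul_of_nonneg_right _ hY0
            calc K⁻¹ * c0 ≤ K⁻¹ * K := mul_le_mul_of_nonneg_left hKc0 hKinv0
              _ = 1 := hKinvK
        _ = Y := one_mul Y
        _ ≤ A * B := hY_le
    · calc A * B ≤ 2 * Y := hAB_le
        _ ≤ (K * c0) * Y := mul_le_mul_of_nonneg_right hKc0' hY0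
        _ = K * (c0 * Y) := by ring
end

section
/- Let s, q₁, q₂, d₁, d₂ ≥ 1 be integers with gcd(q₁,q₂) = 1, d₁ | q₁ and d₂ | q₂. Then for every primitive vector c ∈ ℤ² and every u ∈ ℤ^s: D_{q₁q₂}(u) = D_{q₁}(u) · D_{q₂}(u), and S_{q₁q₂, d₁d₂c}(u) = S_{q₁, d₁c}(u) · S_{q₂, d₂c}(u). -/
open MeasureTheory Real Matrix Finset

noncomputable section St15Aux
namespace St15

lemma e2pi_add (x y : ℝ) : e2pi (x + y) = e2pi x * e2pi y := by
  rw [e2pi, e2pi, e2pi, ← Complex.exp_add]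
  congr 1
  push_cast
  ring

lemma e2pi_int (k : ℤ) : e2pi (k : ℝ) = 1 := by
  rw [e2pi, show (2 * (Real.pi : ℂ) * Complex.I * ((k : ℝ) : ℂ))
      = (k : ℂ) * (2 * (Real.pi : ℂ) * Complex.I) by push_cast; ring]
  exact Complex.exp_int_mul_two_pi_mul_I k

lemma eqc_add (q : ℕ) (m n : ℤ) : eqc q (m + n) = eqc q m * eqc q n := by
  rw [eqc, eqc, eqc, ← e2pi_add]
  congr 1
  push_cast
  ring

lemma eqc_mul_self (q : ℕ) (hq : q ≠ 0) (k : ℤ) : eqc q ((q : ℤ) * k) = 1 := by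
  rw [eqc]
  have hq' : (q : ℝ) ≠ 0 := Nat.cast_ne_zero.mpr hq
  have : (((q : ℤ) * k : ℤ) : ℝ) / (q : ℝ) = (k : ℝ) := by
    push_cast
    field_simp
  rw [this]
  exact e2pi_int k

lemma eqc_emod (q : ℕ) (hq : q ≠ 0) (n : ℤ) : eqc q (n % (q : ℤ)) = eqc q n := by
  conv_rhs => rw [← Int.emod_add_mul_ediv n (q : ℤ)]
  rw [eqc_add, eqc_mul_self q hq, mul_one]

/-- Additive character of `ZMod q`. -/
def phase (q : ℕ) (x : ZMod q) : ℂ := eqc q (x.val : ℤ)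

lemma phase_intCast (q : ℕ) [NeZero q] (n : ℤ) : phase q ((n : ZMod q)) = eqc q n := by
  rw [phase, ZMod.val_intCast, eqc_emod q (NeZero.ne q)]

lemma intCast_val_self (q : ℕ) [NeZero q] (x : ZMod q) : (((x.val : ℤ)) : ZMod q) = x := by
  push_cast
  simp [ZMod.natCast_val]

lemma map_quadEval {s : ℕ} {R S : Type*} [CommRing R] [CommRing S] (f : R →+* S)
    (M : Matrix (Fin s) (Fin s) ℤ) (x : Fin s → R) :
    f (quadEval M x) = quadEval M (fun i => f (x i)) := by
  simp [quadEval, map_sum, _root_.map_mul, map_intCast]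

lemma quadEval_mul_left {s : ℕ} {R : Type*} [CommRing R] (M : Matrix (Fin s) (Fin s) ℤ)
    (r : R) (x : Fin s → R) :
    quadEval M (fun i => r * x i) = r ^ 2 * quadEval M x := by
  rw [quadEval, quadEval, Finset.mul_sum]
  refine Finset.sum_congr rfl fun i _ => ?_
  rw [Finset.mul_sum]
  exact Finset.sum_congr rfl fun j _ => by ring

end St15
end St15Aux
noncomputable section St15Aux2
namespace St15

variable {s : ℕ} (M₁ M₂ : Matrix (Fin s) (Fin s) ℤ) (u : Fin s → ℤ)

/-- The phase polynomial over `ZMod q`. -/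
def Phi (q : ℕ) (a : ZMod q × ZMod q) (b : Fin s → ZMod q) : ZMod q :=
  a.1 * quadEval M₁ b + a.2 * quadEval M₂ b + ∑ i, b i * (u i : ZMod q)

/-- Primitivity condition. -/
def condG (q : ℕ) (a : ZMod q × ZMod q) : Prop :=
  Nat.gcd (Nat.gcd a.1.val a.2.val) q = 1

/-- Divisibility condition. -/
def condD (q d : ℕ) (c : ℤ × ℤ) (a : ZMod q × ZMod q) : Prop :=
  (d : ZMod q) * ((c.1 : ZMod q) * a.2 - (c.2 : ZMod q) * a.1) = 0

instance (q : ℕ) : DecidablePred (condG q) := fun a => by unfold condG; infer_instance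

instance (q d : ℕ) (c : ℤ × ℤ) : DecidablePred (condD q d c) := fun a => by
  unfold condD; infer_instance

lemma condD_bridge (q d : ℕ) [NeZero q] (c : ℤ × ℤ) (x y : ℕ) :
    ((q : ℤ) ∣ (d : ℤ) * (c.1 * (y : ℤ) - c.2 * (x : ℤ))) ↔
      condD q d c (((x : ℕ) : ZMod q), ((y : ℕ) : ZMod q)) := by
  rw [← ZMod.intCast_zmod_eq_zero_iff_dvd, condD]
  have : (((d : ℤ) * (c.1 * (y : ℤ) - c.2 * (x : ℤ)) : ℤ) : ZMod q)
      = (d : ZMod q) * ((c.1 : ZMod q) * ((y : ℕ) : ZMod q)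
        - (c.2 : ZMod q) * ((x : ℕ) : ZMod q)) := by
    push_cast
    ring
  rw [this]

lemma pair_val_cast (q : ℕ) [NeZero q] (a : ZMod q × ZMod q) :
    (((a.1.val : ℕ) : ZMod q), ((a.2.val : ℕ) : ZMod q)) = a :=
  Prod.ext (by simp [ZMod.natCast_val]) (by simp [ZMod.natCast_val])

lemma phase_int_expr (q : ℕ) [NeZero q] (a : ZMod q × ZMod q) (b : Fin s → ZMod q) :
    eqc q ((a.1.val : ℤ) * quadEval M₁ (fun i => ((b i).val : ℤ))
      + (a.2.val : ℤ) * quadEval M₂ (fun i => ((b i).val : ℤ))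
      + ∑ i, ((b i).val : ℤ) * u i)
    = phase q (Phi M₁ M₂ u q a b) := by
  rw [← phase_intCast]
  congr 1
  have hq : ∀ M : Matrix (Fin s) (Fin s) ℤ,
      ((quadEval M (fun i => ((b i).val : ℤ)) : ℤ) : ZMod q) = quadEval M b := by
    intro M
    rw [show ((quadEval M (fun i => ((b i).val : ℤ)) : ℤ) : ZMod q)
        = (Int.castRingHom (ZMod q)) (quadEval M (fun i => ((b i).val : ℤ))) from rfl,
      map_quadEval]
    exact congrArg (quadEval M) (funext fun i => intCast_val_self q (b i))
  rw [Phi]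
  push_cast
  rw [hq M₁, hq M₂]
  simp [ZMod.natCast_val]

lemma inner_sum_eq (q : ℕ) [NeZero q] (α : ZMod q × ZMod q) :
    ∑ b ∈ Fintype.piFinset (fun _ : Fin s => Finset.range q),
      eqc q ((α.1.val : ℤ) * quadEval M₁ (fun i => (b i : ℤ))
        + (α.2.val : ℤ) * quadEval M₂ (fun i => (b i : ℤ)) + ∑ i, (b i : ℤ) * u i)
    = ∑ b : Fin s → ZMod q, phase q (Phi M₁ M₂ u q α b) := by
  refine Finset.sum_nbij' (i := fun b => fun i => ((b i : ℕ) : ZMod q))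
    (j := fun b => fun i => (b i).val) (fun b _ => Finset.mem_univ _)
    (fun b _ => ?_) (fun b hb => ?_) (fun b _ => ?_) (fun b hb => ?_)
  · rw [Fintype.mem_piFinset]
    exact fun i => Finset.mem_range.mpr (ZMod.val_lt _)
  · funext i
    have : b i < q := Finset.mem_range.mp ((Fintype.mem_piFinset).mp hb i)
    exact ZMod.val_cast_of_lt this
  · funext i
    simp [ZMod.natCast_val]
  · rw [← phase_int_expr M₁ M₂ u q α (fun i => ((b i : ℕ) : ZMod q))]
    have hv : ∀ i, ((((b i : ℕ) : ZMod q)).val : ℤ) = (b i : ℤ) := by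
      intro i
      have : b i < q := Finset.mem_range.mp ((Fintype.mem_piFinset).mp hb i)
      exact_mod_cast congrArg (Nat.cast : ℕ → ℤ) (ZMod.val_cast_of_lt this)
    simp only [hv]

lemma Dq_eq (q : ℕ) [NeZero q] :
    Dq s M₁ M₂ q u =
      ∑ a ∈ Finset.univ.filter (condG q), ∑ b : Fin s → ZMod q,
        phase q (Phi M₁ M₂ u q a b) := by
  rw [Dq, residues]
  refine Finset.sum_nbij' (i := fun a => (((a.1 : ℕ) : ZMod q), ((a.2 : ℕ) : ZMod q)))
    (j := fun a => (a.1.val, a.2.val)) (fun a ha => ?_) (fun a ha => ?_)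
    (fun a ha => ?_) (fun a ha => ?_) (fun a ha => ?_)
  · rw [Finset.mem_filter] at ha ⊢
    obtain ⟨hmem, hg⟩ := ha
    rw [Finset.mem_product, Finset.mem_range, Finset.mem_range] at hmem
    refine ⟨Finset.mem_univ _, ?_⟩
    rw [condG]
    rwa [ZMod.val_cast_of_lt hmem.1, ZMod.val_cast_of_lt hmem.2]
  · rw [Finset.mem_filter] at ha ⊢
    refine ⟨?_, ha.2⟩
    rw [Finset.mem_product, Finset.mem_range, Finset.mem_range]
    exact ⟨ZMod.val_lt _, ZMod.val_lt _⟩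
  · rw [Finset.mem_filter, Finset.mem_product, Finset.mem_range, Finset.mem_range] at ha
    obtain ⟨⟨h1, h2⟩, -⟩ := ha
    exact Prod.ext (ZMod.val_cast_of_lt h1) (ZMod.val_cast_of_lt h2)
  · exact pair_val_cast q _
  · rw [Finset.mem_filter, Finset.mem_product, Finset.mem_range, Finset.mem_range] at ha
    obtain ⟨⟨h1, h2⟩, -⟩ := ha
    rw [← inner_sum_eq M₁ M₂ u q (((a.1 : ℕ) : ZMod q), ((a.2 : ℕ) : ZMod q))]
    have e1 : ((((a.1 : ℕ) : ZMod q)).val : ℤ) = (a.1 : ℤ) :=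
      by exact_mod_cast congrArg (Nat.cast : ℕ → ℤ) (ZMod.val_cast_of_lt h1)
    have e2 : ((((a.2 : ℕ) : ZMod q)).val : ℤ) = (a.2 : ℤ) :=
      by exact_mod_cast congrArg (Nat.cast : ℕ → ℤ) (ZMod.val_cast_of_lt h2)
    simp only [e1, e2]

lemma Sq_eq (q d : ℕ) [NeZero q] (c : ℤ × ℤ) :
    Sq s M₁ M₂ q d c u =
      ∑ a ∈ Finset.univ.filter (fun a => condG q a ∧ condD q d c a),
        ∑ b : Fin s → ZMod q, phase q (Phi M₁ M₂ u q a b) := by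
  rw [Sq, residues, Finset.filter_filter]
  refine Finset.sum_nbij' (i := fun a => (((a.1 : ℕ) : ZMod q), ((a.2 : ℕ) : ZMod q)))
    (j := fun a => (a.1.val, a.2.val)) (fun a ha => ?_) (fun a ha => ?_)
    (fun a ha => ?_) (fun a ha => ?_) (fun a ha => ?_)
  · rw [Finset.mem_filter] at ha ⊢
    obtain ⟨hmem, hg, hd⟩ := ha
    rw [Finset.mem_product, Finset.mem_range, Finset.mem_range] at hmem
    refine ⟨Finset.mem_univ _, ?_, ?_⟩
    · rw [condG]
      rwa [ZMod.val_cast_of_lt hmem.1, ZMod.val_cast_of_lt hmem.2]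
    · exact (condD_bridge q d c a.1 a.2).mp hd
  · rw [Finset.mem_filter] at ha ⊢
    obtain ⟨-, hg, hd⟩ := ha
    refine ⟨?_, ?_, ?_⟩
    · rw [Finset.mem_product, Finset.mem_range, Finset.mem_range]
      exact ⟨ZMod.val_lt _, ZMod.val_lt _⟩
    · rwa [condG] at hg
    · refine (condD_bridge q d c a.1.val a.2.val).mpr ?_
      rwa [pair_val_cast q a]
  · rw [Finset.mem_filter, Finset.mem_product, Finset.mem_range, Finset.mem_range] at ha
    obtain ⟨⟨h1, h2⟩, -⟩ := ha
    exact Prod.ext (ZMod.val_cast_of_lt h1) (ZMod.val_cast_of_lt h2)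
  · exact pair_val_cast q _
  · rw [Finset.mem_filter, Finset.mem_product, Finset.mem_range, Finset.mem_range] at ha
    obtain ⟨⟨h1, h2⟩, -⟩ := ha
    rw [← inner_sum_eq M₁ M₂ u q (((a.1 : ℕ) : ZMod q), ((a.2 : ℕ) : ZMod q))]
    have e1 : ((((a.1 : ℕ) : ZMod q)).val : ℤ) = (a.1 : ℤ) :=
      by exact_mod_cast congrArg (Nat.cast : ℕ → ℤ) (ZMod.val_cast_of_lt h1)
    have e2 : ((((a.2 : ℕ) : ZMod q)).val : ℤ) = (a.2 : ℤ) :=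
      by exact_mod_cast congrArg (Nat.cast : ℕ → ℤ) (ZMod.val_cast_of_lt h2)
    simp only [e1, e2]

end St15
end St15Aux2
noncomputable section St15Aux3
namespace St15

variable {s : ℕ} (M₁ M₂ : Matrix (Fin s) (Fin s) ℤ) (u : Fin s → ℤ)

lemma condG_iff (q : ℕ) [NeZero q] (a : ZMod q × ZMod q) :
    condG q a ↔ ∃ x y : ZMod q, x * a.1 + y * a.2 = 1 := by
  constructor
  · intro h
    rw [condG] at h
    set A : ℤ := (a.1.val : ℤ) with hA
    set B : ℤ := (a.2.val : ℤ) with hB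
    set G : ℕ := Nat.gcd a.1.val a.2.val with hG
    have h1 : (G : ℤ) = A * Nat.gcdA a.1.val a.2.val + B * Nat.gcdB a.1.val a.2.val :=
      Nat.gcd_eq_gcd_ab a.1.val a.2.val
    have h2 : ((Nat.gcd G q : ℕ) : ℤ) = (G : ℤ) * Nat.gcdA G q + (q : ℤ) * Nat.gcdB G q :=
      Nat.gcd_eq_gcd_ab G q
    rw [h] at h2
    set α := Nat.gcdA a.1.val a.2.val
    set β := Nat.gcdB a.1.val a.2.val
    set m := Nat.gcdA G q
    set k := Nat.gcdB G q
    refine ⟨((α * m : ℤ) : ZMod q), ((β * m : ℤ) : ZMod q), ?_⟩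
    have ha1 : ((A : ℤ) : ZMod q) = a.1 := intCast_val_self q a.1
    have ha2 : ((B : ℤ) : ZMod q) = a.2 := intCast_val_self q a.2
    rw [← ha1, ← ha2, ← Int.cast_mul, ← Int.cast_mul, ← Int.cast_add]
    have key : (α * m * A + β * m * B : ℤ) = 1 - (q : ℤ) * k := by
      push_cast at h2
      linear_combination (-m) * h1 - h2
    rw [key]
    push_cast
    simp [ZMod.natCast_self]
  · rintro ⟨x, y, hxy⟩
    rw [condG]
    set g : ℕ := Nat.gcd (Nat.gcd a.1.val a.2.val) q with hg
    have hga : (g : ℤ) ∣ (a.1.val : ℤ) :=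
      Int.natCast_dvd_natCast.mpr ((Nat.gcd_dvd_left _ q).trans (Nat.gcd_dvd_left _ _))
    have hgb : (g : ℤ) ∣ (a.2.val : ℤ) :=
      Int.natCast_dvd_natCast.mpr ((Nat.gcd_dvd_left _ q).trans (Nat.gcd_dvd_right _ _))
    have hgq : (g : ℤ) ∣ (q : ℤ) := Int.natCast_dvd_natCast.mpr (Nat.gcd_dvd_right _ _)
    have hdvd : (q : ℤ) ∣ ((x.val : ℤ) * (a.1.val : ℤ) + (y.val : ℤ) * (a.2.val : ℤ) - 1) := by
      rw [← ZMod.intCast_zmod_eq_zero_iff_dvd]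
      push_cast
      simp only [ZMod.natCast_val, ZMod.cast_id', id_eq]
      rw [hxy]
      ring
    have h1 : (g : ℤ) ∣ 1 := by
      have hx := dvd_mul_of_dvd_right hga ((x.val : ℤ))
      have hy := dvd_mul_of_dvd_right hgb ((y.val : ℤ))
      have := dvd_sub (dvd_add hx hy) (hgq.trans hdvd)
      simpa using this
    exact_mod_cast Int.eq_one_of_dvd_one (by positivity) h1
  
lemma condG_unit (q : ℕ) [NeZero q] (v : (ZMod q)ˣ) (a : ZMod q × ZMod q) :
    condG q ((v : ZMod q) * a.1, (v : ZMod q) * a.2) ↔ condG q a := by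
  rw [condG_iff, condG_iff]
  constructor
  · rintro ⟨x, y, h⟩
    exact ⟨x * v, y * v, by linear_combination h⟩
  · rintro ⟨x, y, h⟩
    have hv : (v : ZMod q) * ((v⁻¹ : (ZMod q)ˣ) : ZMod q) = 1 := by
      exact_mod_cast v.mul_inv
    refine ⟨x * ((v⁻¹ : (ZMod q)ˣ) : ZMod q), y * ((v⁻¹ : (ZMod q)ˣ) : ZMod q), ?_⟩
    linear_combination (x * a.1) * hv + (y * a.2) * hv + h

lemma condD_unit (q d : ℕ) (c : ℤ × ℤ) [NeZero q] (v : (ZMod q)ˣ) (a : ZMod q × ZMod q) :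
    condD q d c ((v : ZMod q) * a.1, (v : ZMod q) * a.2) ↔ condD q d c a := by
  rw [condD, condD]
  rw [show (d : ZMod q) * ((c.1 : ZMod q) * ((v : ZMod q) * a.2)
      - (c.2 : ZMod q) * ((v : ZMod q) * a.1))
    = (v : ZMod q) * ((d : ZMod q) * ((c.1 : ZMod q) * a.2 - (c.2 : ZMod q) * a.1)) from by ring]
  exact Units.mul_right_eq_zero v

lemma twist (q : ℕ) [NeZero q] (v : (ZMod q)ˣ) (C : ZMod q × ZMod q → Prop) [DecidablePred C]
    (hC : ∀ a : ZMod q × ZMod q, C ((v : ZMod q) * a.1, (v : ZMod q) * a.2) ↔ C a) :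
    ∑ a ∈ Finset.univ.filter C, ∑ b : Fin s → ZMod q,
        phase q ((v : ZMod q) * Phi M₁ M₂ u q a b)
    = ∑ a ∈ Finset.univ.filter C, ∑ b : Fin s → ZMod q, phase q (Phi M₁ M₂ u q a b) := by
  have hv : (v : ZMod q) * ((v⁻¹ : (ZMod q)ˣ) : ZMod q) = 1 := by exact_mod_cast v.mul_inv
  have hv' : ((v⁻¹ : (ZMod q)ˣ) : ZMod q) * (v : ZMod q) = 1 := by exact_mod_cast v.inv_mul
  set w : ZMod q := ((v⁻¹ : (ZMod q)ˣ) : ZMod q) with hw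
  symm
  refine Finset.sum_nbij' (i := fun a => ((v : ZMod q) * a.1, (v : ZMod q) * a.2))
    (j := fun a => (w * a.1, w * a.2)) (fun a ha => ?_) (fun a ha => ?_) (fun a _ => ?_)
    (fun a _ => ?_) (fun a _ => ?_)
  · rw [Finset.mem_filter] at ha ⊢
    exact ⟨Finset.mem_univ _, (hC a).mpr ha.2⟩
  · rw [Finset.mem_filter] at ha ⊢
    refine ⟨Finset.mem_univ _, ?_⟩
    have := (hC (w * a.1, w * a.2)).mp
    simp only [← mul_assoc, hv, one_mul] at this
    exact this ha.2
  · refine Prod.ext ?_ ?_ <;> simp [← mul_assoc, hv', one_mul]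
  · refine Prod.ext ?_ ?_ <;> simp [← mul_assoc, hv, one_mul]
  · -- reindex the inner sum over b
    let E : (Fin s → ZMod q) ≃ (Fin s → ZMod q) :=
      { toFun := fun b i => w * b i
        invFun := fun b i => (v : ZMod q) * b i
        left_inv := fun b => funext fun i => by simp [← mul_assoc, hv, one_mul]
        right_inv := fun b => funext fun i => by simp [← mul_assoc, hv', one_mul] }
    rw [← Equiv.sum_comp E
      (fun b => phase q ((v : ZMod q) * Phi M₁ M₂ u q ((v : ZMod q) * a.1, (v : ZMod q) * a.2) b))]
    refine Finset.sum_congr rfl fun b _ => ?_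
    congr 1
    show Phi M₁ M₂ u q a b
        = (v : ZMod q) * Phi M₁ M₂ u q ((v : ZMod q) * a.1, (v : ZMod q) * a.2) (fun i => w * b i)
    rw [Phi, Phi]
    simp only
    rw [quadEval_mul_left, quadEval_mul_left,
      show (∑ i, (w * b i) * (u i : ZMod q)) = w * ∑ i, b i * (u i : ZMod q) from by
        rw [Finset.mul_sum]; exact Finset.sum_congr rfl fun i _ => by ring]
    linear_combination (-(((v : ZMod q) * w + 1)
      * (a.1 * quadEval M₁ b + a.2 * quadEval M₂ b) + ∑ i, b i * (u i : ZMod q))) * hv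

end St15
end St15Aux3
noncomputable section St15Aux4
namespace St15

variable {s : ℕ} (M₁ M₂ : Matrix (Fin s) (Fin s) ℤ) (u : Fin s → ℤ)

/-- Reduction mod the first factor. -/
def pi1 (q₁ q₂ : ℕ) : ZMod (q₁ * q₂) →+* ZMod q₁ :=
  ZMod.castHom (dvd_mul_right q₁ q₂) (ZMod q₁)

/-- Reduction mod the second factor. -/
def pi2 (q₁ q₂ : ℕ) : ZMod (q₁ * q₂) →+* ZMod q₂ :=
  ZMod.castHom (dvd_mul_left q₂ q₁) (ZMod q₂)

lemma crt_apply (q₁ q₂ : ℕ) [NeZero q₁] [NeZero q₂] (hcop : Nat.Coprime q₁ q₂)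
    (x : ZMod (q₁ * q₂)) :
    ZMod.chineseRemainder hcop x = (pi1 q₁ q₂ x, pi2 q₁ q₂ x) := by
  haveI : NeZero (q₁ * q₂) := ⟨Nat.mul_ne_zero (NeZero.ne q₁) (NeZero.ne q₂)⟩
  show (ZMod.cast x : ZMod q₁ × ZMod q₂) = (ZMod.cast x, ZMod.cast x)
  rw [← ZMod.natCast_val x, ← ZMod.natCast_val x, ← ZMod.natCast_val x]
  exact Prod.ext rfl rfl

lemma pi1_symm (q₁ q₂ : ℕ) [NeZero q₁] [NeZero q₂] (hcop : Nat.Coprime q₁ q₂)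
    (p : ZMod q₁ × ZMod q₂) :
    pi1 q₁ q₂ ((ZMod.chineseRemainder hcop).symm p) = p.1 := by
  have := crt_apply q₁ q₂ hcop ((ZMod.chineseRemainder hcop).symm p)
  rw [RingEquiv.apply_symm_apply] at this
  exact (congrArg Prod.fst this).symm

lemma pi2_symm (q₁ q₂ : ℕ) [NeZero q₁] [NeZero q₂] (hcop : Nat.Coprime q₁ q₂)
    (p : ZMod q₁ × ZMod q₂) :
    pi2 q₁ q₂ ((ZMod.chineseRemainder hcop).symm p) = p.2 := by
  have := crt_apply q₁ q₂ hcop ((ZMod.chineseRemainder hcop).symm p)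
  rw [RingEquiv.apply_symm_apply] at this
  exact (congrArg Prod.snd this).symm

lemma crt_symm_pi (q₁ q₂ : ℕ) [NeZero q₁] [NeZero q₂] (hcop : Nat.Coprime q₁ q₂)
    (x : ZMod (q₁ * q₂)) :
    (ZMod.chineseRemainder hcop).symm (pi1 q₁ q₂ x, pi2 q₁ q₂ x) = x := by
  rw [← crt_apply q₁ q₂ hcop x, RingEquiv.symm_apply_apply]

lemma bezout (q₁ q₂ : ℕ) (hcop : Nat.Coprime q₁ q₂) :
    (1 : ℤ) = (q₁ : ℤ) * Nat.gcdA q₁ q₂ + (q₂ : ℤ) * Nat.gcdB q₁ q₂ := by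
  have h := Nat.gcd_eq_gcd_ab q₁ q₂
  rw [Nat.Coprime.gcd_eq_one hcop] at h
  exact_mod_cast h

lemma eqc_split (q₁ q₂ : ℕ) [NeZero q₁] [NeZero q₂] (hcop : Nat.Coprime q₁ q₂) (n : ℤ) :
    eqc (q₁ * q₂) n = eqc q₁ (Nat.gcdB q₁ q₂ * n) * eqc q₂ (Nat.gcdA q₁ q₂ * n) := by
  have hq₁ : (q₁ : ℝ) ≠ 0 := Nat.cast_ne_zero.mpr (NeZero.ne q₁)
  have hq₂ : (q₂ : ℝ) ≠ 0 := Nat.cast_ne_zero.mpr (NeZero.ne q₂)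
  have hAB : ((q₁ : ℝ)) * (Nat.gcdA q₁ q₂ : ℝ) + (q₂ : ℝ) * (Nat.gcdB q₁ q₂ : ℝ) = 1 := by
    exact_mod_cast (bezout q₁ q₂ hcop).symm
  rw [eqc, eqc, eqc, ← e2pi_add]
  congr 1
  push_cast
  rw [div_add_div _ _ hq₁ hq₂, div_eq_div_iff (mul_ne_zero hq₁ hq₂) (mul_ne_zero hq₁ hq₂)]
  set A : ℝ := (Nat.gcdA q₁ q₂ : ℝ)
  set B : ℝ := (Nat.gcdB q₁ q₂ : ℝ)
  linear_combination (-((n : ℝ) * q₁ * q₂)) * hAB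

lemma phase_split (q₁ q₂ : ℕ) [NeZero q₁] [NeZero q₂] (hcop : Nat.Coprime q₁ q₂)
    (x : ZMod (q₁ * q₂)) :
    phase (q₁ * q₂) x
      = phase q₁ (((Nat.gcdB q₁ q₂ : ℤ) : ZMod q₁) * pi1 q₁ q₂ x)
        * phase q₂ (((Nat.gcdA q₁ q₂ : ℤ) : ZMod q₂) * pi2 q₁ q₂ x) := by
  haveI : NeZero (q₁ * q₂) := ⟨Nat.mul_ne_zero (NeZero.ne q₁) (NeZero.ne q₂)⟩
  obtain ⟨n, rfl⟩ : ∃ n : ℤ, (n : ZMod (q₁ * q₂)) = x := ⟨(x.val : ℤ), intCast_val_self _ x⟩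
  rw [show pi1 q₁ q₂ ((n : ZMod (q₁ * q₂))) = ((n : ℤ) : ZMod q₁) from map_intCast _ n,
    show pi2 q₁ q₂ ((n : ZMod (q₁ * q₂))) = ((n : ℤ) : ZMod q₂) from map_intCast _ n,
    show ((Nat.gcdB q₁ q₂ : ℤ) : ZMod q₁) * ((n : ℤ) : ZMod q₁)
      = ((Nat.gcdB q₁ q₂ * n : ℤ) : ZMod q₁) from by push_cast; ring,
    show ((Nat.gcdA q₁ q₂ : ℤ) : ZMod q₂) * ((n : ℤ) : ZMod q₂)
      = ((Nat.gcdA q₁ q₂ * n : ℤ) : ZMod q₂) from by push_cast; ring,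
    phase_intCast, phase_intCast, phase_intCast]
  exact eqc_split q₁ q₂ hcop n

lemma gcdB_isUnit (q₁ q₂ : ℕ) [NeZero q₁] (hcop : Nat.Coprime q₁ q₂) :
    IsUnit ((Nat.gcdB q₁ q₂ : ℤ) : ZMod q₁) := by
  refine IsUnit.of_mul_eq_one ((q₂ : ℕ) : ZMod q₁) ?_
  have h : ((Nat.gcdB q₁ q₂ * q₂ : ℤ) : ZMod q₁) = 1 := by
    rw [show (Nat.gcdB q₁ q₂ * q₂ : ℤ) = 1 - q₁ * Nat.gcdA q₁ q₂ from by
      linear_combination (-1 : ℤ) * bezout q₁ q₂ hcop]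
    push_cast
    simp
  push_cast at h ⊢
  linear_combination h

lemma gcdA_isUnit (q₁ q₂ : ℕ) [NeZero q₂] (hcop : Nat.Coprime q₁ q₂) :
    IsUnit ((Nat.gcdA q₁ q₂ : ℤ) : ZMod q₂) := by
  refine IsUnit.of_mul_eq_one ((q₁ : ℕ) : ZMod q₂) ?_
  have h : ((Nat.gcdA q₁ q₂ * q₁ : ℤ) : ZMod q₂) = 1 := by
    rw [show (Nat.gcdA q₁ q₂ * q₁ : ℤ) = 1 - q₂ * Nat.gcdB q₁ q₂ from by
      linear_combination (-1 : ℤ) * bezout q₁ q₂ hcop]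
    push_cast
    simp
  push_cast at h ⊢
  linear_combination h

lemma Phi_map (q q' : ℕ) (h : q' ∣ q) (a : ZMod q × ZMod q) (b : Fin s → ZMod q) :
    ZMod.castHom h (ZMod q') (Phi M₁ M₂ u q a b)
      = Phi M₁ M₂ u q' (ZMod.castHom h (ZMod q') a.1, ZMod.castHom h (ZMod q') a.2)
        (fun i => ZMod.castHom h (ZMod q') (b i)) := by
  rw [Phi, Phi]
  simp [map_add, _root_.map_mul, map_sum, map_intCast, map_quadEval]

lemma crt_zero_iff (q₁ q₂ : ℕ) [NeZero q₁] [NeZero q₂] (hcop : Nat.Coprime q₁ q₂)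
    (x : ZMod (q₁ * q₂)) :
    x = 0 ↔ pi1 q₁ q₂ x = 0 ∧ pi2 q₁ q₂ x = 0 := by
  constructor
  · rintro rfl
    exact ⟨map_zero _, map_zero _⟩
  · rintro ⟨h1, h2⟩
    apply (ZMod.chineseRemainder hcop).injective
    rw [crt_apply q₁ q₂ hcop, h1, h2, map_zero]
    rfl

lemma condG_split (q₁ q₂ : ℕ) [NeZero q₁] [NeZero q₂] (hcop : Nat.Coprime q₁ q₂)
    (a : ZMod (q₁ * q₂) × ZMod (q₁ * q₂)) :
    condG (q₁ * q₂) a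
      ↔ condG q₁ (pi1 q₁ q₂ a.1, pi1 q₁ q₂ a.2) ∧ condG q₂ (pi2 q₁ q₂ a.1, pi2 q₁ q₂ a.2) := by
  haveI : NeZero (q₁ * q₂) := ⟨Nat.mul_ne_zero (NeZero.ne q₁) (NeZero.ne q₂)⟩
  rw [condG_iff, condG_iff, condG_iff]
  constructor
  · rintro ⟨x, y, h⟩
    constructor
    · exact ⟨pi1 q₁ q₂ x, pi1 q₁ q₂ y, by
        have := congrArg (pi1 q₁ q₂) h
        simpa [map_add, _root_.map_mul] using this⟩
    · exact ⟨pi2 q₁ q₂ x, pi2 q₁ q₂ y, by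
        have := congrArg (pi2 q₁ q₂) h
        simpa [map_add, _root_.map_mul] using this⟩
  · rintro ⟨⟨x₁, y₁, h₁⟩, ⟨x₂, y₂, h₂⟩⟩
    refine ⟨(ZMod.chineseRemainder hcop).symm (x₁, x₂),
      (ZMod.chineseRemainder hcop).symm (y₁, y₂), ?_⟩
    apply (ZMod.chineseRemainder hcop).injective
    rw [map_add, _root_.map_mul, _root_.map_mul, _root_.map_one,
      RingEquiv.apply_symm_apply, RingEquiv.apply_symm_apply,
      crt_apply q₁ q₂ hcop a.1, crt_apply q₁ q₂ hcop a.2]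
    refine Prod.ext ?_ ?_ <;> simp [h₁, h₂]

lemma condD_split (q₁ q₂ d₁ d₂ : ℕ) [NeZero q₁] [NeZero q₂] (hcop : Nat.Coprime q₁ q₂)
    (c : ℤ × ℤ) (hd₂q₁ : Nat.Coprime d₂ q₁) (hd₁q₂ : Nat.Coprime d₁ q₂)
    (a : ZMod (q₁ * q₂) × ZMod (q₁ * q₂)) :
    condD (q₁ * q₂) (d₁ * d₂) c a
      ↔ condD q₁ d₁ c (pi1 q₁ q₂ a.1, pi1 q₁ q₂ a.2)
        ∧ condD q₂ d₂ c (pi2 q₁ q₂ a.1, pi2 q₁ q₂ a.2) := by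
  haveI : NeZero (q₁ * q₂) := ⟨Nat.mul_ne_zero (NeZero.ne q₁) (NeZero.ne q₂)⟩
  rw [condD, crt_zero_iff q₁ q₂ hcop]
  have h1 : pi1 q₁ q₂ ((d₁ * d₂ : ℕ) * ((c.1 : ZMod (q₁ * q₂)) * a.2 - (c.2 : ZMod (q₁ * q₂)) * a.1))
      = ((ZMod.unitOfCoprime d₂ hd₂q₁ : (ZMod q₁)ˣ) : ZMod q₁)
        * ((d₁ : ZMod q₁) * ((c.1 : ZMod q₁) * pi1 q₁ q₂ a.2 - (c.2 : ZMod q₁) * pi1 q₁ q₂ a.1)) := by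
    simp only [_root_.map_mul, map_sub, map_natCast, map_intCast, ZMod.coe_unitOfCoprime]
    push_cast
    ring
  have h2 : pi2 q₁ q₂ ((d₁ * d₂ : ℕ) * ((c.1 : ZMod (q₁ * q₂)) * a.2 - (c.2 : ZMod (q₁ * q₂)) * a.1))
      = ((ZMod.unitOfCoprime d₁ hd₁q₂ : (ZMod q₂)ˣ) : ZMod q₂)
        * ((d₂ : ZMod q₂) * ((c.1 : ZMod q₂) * pi2 q₁ q₂ a.2 - (c.2 : ZMod q₂) * pi2 q₁ q₂ a.1)) := by
    simp only [_root_.map_mul, map_sub, map_natCast, map_intCast, ZMod.coe_unitOfCoprime]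
    push_cast
    ring
  rw [h1, h2, Units.mul_right_eq_zero, Units.mul_right_eq_zero]
  rw [condD, condD]

end St15
end St15Aux4
noncomputable section St15Aux5
namespace St15

lemma sum_prod_type' {α β M : Type*} [Fintype α] [Fintype β] [AddCommMonoid M]
    (f : α × β → M) : ∑ p : α × β, f p = ∑ a : α, ∑ b : β, f (a, b) := by
  rw [← Finset.univ_product_univ, Finset.sum_product]

variable {s : ℕ} (M₁ M₂ : Matrix (Fin s) (Fin s) ℤ) (u : Fin s → ℤ)

lemma split_prod (q₁ q₂ : ℕ) [NeZero q₁] [NeZero q₂] (hcop : Nat.Coprime q₁ q₂)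
    (C : ZMod (q₁ * q₂) × ZMod (q₁ * q₂) → Prop) [DecidablePred C]
    (C₁ : ZMod q₁ × ZMod q₁ → Prop) [DecidablePred C₁]
    (C₂ : ZMod q₂ × ZMod q₂ → Prop) [DecidablePred C₂]
    (hsplit : ∀ a : ZMod (q₁ * q₂) × ZMod (q₁ * q₂),
      C a ↔ C₁ (pi1 q₁ q₂ a.1, pi1 q₁ q₂ a.2) ∧ C₂ (pi2 q₁ q₂ a.1, pi2 q₁ q₂ a.2))
    (g₁ : ZMod q₁ × ZMod q₁ → (Fin s → ZMod q₁) → ℂ)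
    (g₂ : ZMod q₂ × ZMod q₂ → (Fin s → ZMod q₂) → ℂ)
    (hg : ∀ (a : ZMod (q₁ * q₂) × ZMod (q₁ * q₂)) (b : Fin s → ZMod (q₁ * q₂)),
      phase (q₁ * q₂) (Phi M₁ M₂ u (q₁ * q₂) a b)
        = g₁ (pi1 q₁ q₂ a.1, pi1 q₁ q₂ a.2) (fun i => pi1 q₁ q₂ (b i))
          * g₂ (pi2 q₁ q₂ a.1, pi2 q₁ q₂ a.2) (fun i => pi2 q₁ q₂ (b i))) :
    ∑ a ∈ Finset.univ.filter C, ∑ b : Fin s → ZMod (q₁ * q₂),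
        phase (q₁ * q₂) (Phi M₁ M₂ u (q₁ * q₂) a b)
    = (∑ a ∈ Finset.univ.filter C₁, ∑ b : Fin s → ZMod q₁, g₁ a b)
      * (∑ a ∈ Finset.univ.filter C₂, ∑ b : Fin s → ZMod q₂, g₂ a b) := by
  haveI : NeZero (q₁ * q₂) := ⟨Nat.mul_ne_zero (NeZero.ne q₁) (NeZero.ne q₂)⟩
  set e := ZMod.chineseRemainder hcop with he
  -- equivalence on pairs
  let E2 : ((ZMod q₁ × ZMod q₁) × (ZMod q₂ × ZMod q₂)) ≃ (ZMod (q₁ * q₂) × ZMod (q₁ * q₂)) :=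
    { toFun := fun p => (e.symm (p.1.1, p.2.1), e.symm (p.1.2, p.2.2))
      invFun := fun a => ((pi1 q₁ q₂ a.1, pi1 q₁ q₂ a.2), (pi2 q₁ q₂ a.1, pi2 q₁ q₂ a.2))
      left_inv := fun p => by
        simp only [he, pi1_symm q₁ q₂ hcop, pi2_symm q₁ q₂ hcop]
      right_inv := fun a => by
        simp only [he, crt_symm_pi q₁ q₂ hcop] }
  let EB : ((Fin s → ZMod q₁) × (Fin s → ZMod q₂)) ≃ (Fin s → ZMod (q₁ * q₂)) :=
    { toFun := fun p i => e.symm (p.1 i, p.2 i)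
      invFun := fun b => (fun i => pi1 q₁ q₂ (b i), fun i => pi2 q₁ q₂ (b i))
      left_inv := fun p => by
        refine Prod.ext (funext fun i => ?_) (funext fun i => ?_)
        · exact pi1_symm q₁ q₂ hcop _
        · exact pi2_symm q₁ q₂ hcop _
      right_inv := fun b => funext fun i => crt_symm_pi q₁ q₂ hcop (b i) }
  have hE2_1 : ∀ p, (pi1 q₁ q₂ (E2 p).1, pi1 q₁ q₂ (E2 p).2) = p.1 := fun p =>
    Prod.ext (pi1_symm q₁ q₂ hcop _) (pi1_symm q₁ q₂ hcop _)
  have hE2_2 : ∀ p, (pi2 q₁ q₂ (E2 p).1, pi2 q₁ q₂ (E2 p).2) = p.2 := fun p =>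
    Prod.ext (pi2_symm q₁ q₂ hcop _) (pi2_symm q₁ q₂ hcop _)
  have hEB_1 : ∀ r, (fun i => pi1 q₁ q₂ (EB r i)) = r.1 := fun r =>
    funext fun i => pi1_symm q₁ q₂ hcop _
  have hEB_2 : ∀ r, (fun i => pi2 q₁ q₂ (EB r i)) = r.2 := fun r =>
    funext fun i => pi2_symm q₁ q₂ hcop _
  rw [Finset.sum_filter, Finset.sum_filter, Finset.sum_filter]
  rw [← Equiv.sum_comp E2 (fun a => if C a then
    (∑ b : Fin s → ZMod (q₁ * q₂), phase (q₁ * q₂) (Phi M₁ M₂ u (q₁ * q₂) a b)) else 0)]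
  rw [Finset.sum_mul_sum]
  rw [sum_prod_type']
  refine Finset.sum_congr rfl fun a₁ _ => Finset.sum_congr rfl fun a₂ _ => ?_
  have hcond : C (E2 (a₁, a₂)) ↔ C₁ a₁ ∧ C₂ a₂ := by
    rw [hsplit, hE2_1 (a₁, a₂), hE2_2 (a₁, a₂)]
  have hinner : ∑ b : Fin s → ZMod (q₁ * q₂), phase (q₁ * q₂) (Phi M₁ M₂ u (q₁ * q₂) (E2 (a₁, a₂)) b)
      = (∑ b : Fin s → ZMod q₁, g₁ a₁ b) * (∑ b : Fin s → ZMod q₂, g₂ a₂ b) := by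
    rw [← Equiv.sum_comp EB
      (fun b => phase (q₁ * q₂) (Phi M₁ M₂ u (q₁ * q₂) (E2 (a₁, a₂)) b))]
    rw [Finset.sum_mul_sum, sum_prod_type']
    refine Finset.sum_congr rfl fun b₁ _ => Finset.sum_congr rfl fun b₂ _ => ?_
    rw [hg (E2 (a₁, a₂)) (EB (b₁, b₂))]
    rw [show (pi1 q₁ q₂ (E2 (a₁, a₂)).1, pi1 q₁ q₂ (E2 (a₁, a₂)).2) = a₁ from hE2_1 (a₁, a₂),
      show (pi2 q₁ q₂ (E2 (a₁, a₂)).1, pi2 q₁ q₂ (E2 (a₁, a₂)).2) = a₂ from hE2_2 (a₁, a₂),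
      show (fun i => pi1 q₁ q₂ (EB (b₁, b₂) i)) = b₁ from hEB_1 (b₁, b₂),
      show (fun i => pi2 q₁ q₂ (EB (b₁, b₂) i)) = b₂ from hEB_2 (b₁, b₂)]
  by_cases h₁ : C₁ a₁ <;> by_cases h₂ : C₂ a₂ <;>
    simp [hcond, h₁, h₂, hinner]

end St15
end St15Aux5
/-- multiplicativity of the exponential sums `D_q` and `S_{q,dc}`. -/
theorem statement15 (s : ℕ) (M₁ M₂ : Matrix (Fin s) (Fin s) ℤ)
    (hM₁ : M₁.IsSymm) (hM₂ : M₂.IsSymm)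
    (q₁ q₂ d₁ d₂ : ℕ) (hq₁ : 1 ≤ q₁) (hq₂ : 1 ≤ q₂) (hd₁ : 1 ≤ d₁) (hd₂ : 1 ≤ d₂)
    (hcop : Nat.Coprime q₁ q₂) (hdq₁ : d₁ ∣ q₁) (hdq₂ : d₂ ∣ q₂)
    (c : ℤ × ℤ) (hc : Int.gcd c.1 c.2 = 1) (u : Fin s → ℤ) :
    Dq s M₁ M₂ (q₁ * q₂) u = Dq s M₁ M₂ q₁ u * Dq s M₁ M₂ q₂ u ∧
    Sq s M₁ M₂ (q₁ * q₂) (d₁ * d₂) c u = Sq s M₁ M₂ q₁ d₁ c u * Sq s M₁ M₂ q₂ d₂ c u := by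
  haveI : NeZero q₁ := ⟨by omega⟩
  haveI : NeZero q₂ := ⟨by omega⟩
  haveI : NeZero (q₁ * q₂) := ⟨Nat.mul_ne_zero (NeZero.ne q₁) (NeZero.ne q₂)⟩
  set B1 : ZMod q₁ := ((Nat.gcdB q₁ q₂ : ℤ) : ZMod q₁) with hB1
  set A2 : ZMod q₂ := ((Nat.gcdA q₁ q₂ : ℤ) : ZMod q₂) with hA2
  have hB : IsUnit B1 := St15.gcdB_isUnit q₁ q₂ hcop
  have hA : IsUnit A2 := St15.gcdA_isUnit q₁ q₂ hcop
  -- the factorization of the summand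
  have hg : ∀ (a : ZMod (q₁ * q₂) × ZMod (q₁ * q₂)) (b : Fin s → ZMod (q₁ * q₂)),
      St15.phase (q₁ * q₂) (St15.Phi M₁ M₂ u (q₁ * q₂) a b)
        = (fun a' b' => St15.phase q₁ (B1 * St15.Phi M₁ M₂ u q₁ a' b'))
            (St15.pi1 q₁ q₂ a.1, St15.pi1 q₁ q₂ a.2) (fun i => St15.pi1 q₁ q₂ (b i))
          * (fun a' b' => St15.phase q₂ (A2 * St15.Phi M₁ M₂ u q₂ a' b'))
            (St15.pi2 q₁ q₂ a.1, St15.pi2 q₁ q₂ a.2) (fun i => St15.pi2 q₁ q₂ (b i)) := by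
    intro a b
    rw [St15.phase_split q₁ q₂ hcop]
    simp only
    rw [show St15.pi1 q₁ q₂ (St15.Phi M₁ M₂ u (q₁ * q₂) a b)
        = St15.Phi M₁ M₂ u q₁ (St15.pi1 q₁ q₂ a.1, St15.pi1 q₁ q₂ a.2)
            (fun i => St15.pi1 q₁ q₂ (b i)) from
      St15.Phi_map M₁ M₂ u (q₁ * q₂) q₁ (dvd_mul_right q₁ q₂) a b,
      show St15.pi2 q₁ q₂ (St15.Phi M₁ M₂ u (q₁ * q₂) a b)
        = St15.Phi M₁ M₂ u q₂ (St15.pi2 q₁ q₂ a.1, St15.pi2 q₁ q₂ a.2)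
            (fun i => St15.pi2 q₁ q₂ (b i)) from
      St15.Phi_map M₁ M₂ u (q₁ * q₂) q₂ (dvd_mul_left q₂ q₁) a b]
  -- untwisting the two factors
  have t1 : ∀ (C : ZMod q₁ × ZMod q₁ → Prop) (_ : DecidablePred C),
      (∀ a : ZMod q₁ × ZMod q₁, C (B1 * a.1, B1 * a.2) ↔ C a) →
      ∑ a ∈ Finset.univ.filter C, ∑ b : Fin s → ZMod q₁,
          St15.phase q₁ (B1 * St15.Phi M₁ M₂ u q₁ a b)
        = ∑ a ∈ Finset.univ.filter C, ∑ b : Fin s → ZMod q₁,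
            St15.phase q₁ (St15.Phi M₁ M₂ u q₁ a b) := by
    intro C hdec hC
    have := St15.twist M₁ M₂ u q₁ hB.unit C (by rwa [hB.unit_spec])
    rwa [hB.unit_spec] at this
  have t2 : ∀ (C : ZMod q₂ × ZMod q₂ → Prop) (_ : DecidablePred C),
      (∀ a : ZMod q₂ × ZMod q₂, C (A2 * a.1, A2 * a.2) ↔ C a) →
      ∑ a ∈ Finset.univ.filter C, ∑ b : Fin s → ZMod q₂,
          St15.phase q₂ (A2 * St15.Phi M₁ M₂ u q₂ a b)
        = ∑ a ∈ Finset.univ.filter C, ∑ b : Fin s → ZMod q₂,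
            St15.phase q₂ (St15.Phi M₁ M₂ u q₂ a b) := by
    intro C hdec hC
    have := St15.twist M₁ M₂ u q₂ hA.unit C (by rwa [hA.unit_spec])
    rwa [hA.unit_spec] at this
  constructor
  · rw [St15.Dq_eq M₁ M₂ u (q₁ * q₂), St15.Dq_eq M₁ M₂ u q₁, St15.Dq_eq M₁ M₂ u q₂]
    rw [St15.split_prod M₁ M₂ u q₁ q₂ hcop (St15.condG (q₁ * q₂)) (St15.condG q₁)
      (St15.condG q₂) (St15.condG_split q₁ q₂ hcop)
      (fun a' b' => St15.phase q₁ (B1 * St15.Phi M₁ M₂ u q₁ a' b'))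
      (fun a' b' => St15.phase q₂ (A2 * St15.Phi M₁ M₂ u q₂ a' b')) hg]
    rw [t1 (St15.condG q₁) inferInstance (fun a => by
        have := St15.condG_unit q₁ hB.unit a
        rwa [hB.unit_spec] at this),
      t2 (St15.condG q₂) inferInstance (fun a => by
        have := St15.condG_unit q₂ hA.unit a
        rwa [hA.unit_spec] at this)]
  · have hd₂q₁ : Nat.Coprime d₂ q₁ := Nat.Coprime.coprime_dvd_left hdq₂ hcop.symm
    have hd₁q₂ : Nat.Coprime d₁ q₂ := Nat.Coprime.coprime_dvd_left hdq₁ hcop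
    rw [St15.Sq_eq M₁ M₂ u (q₁ * q₂) (d₁ * d₂) c, St15.Sq_eq M₁ M₂ u q₁ d₁ c,
      St15.Sq_eq M₁ M₂ u q₂ d₂ c]
    rw [St15.split_prod M₁ M₂ u q₁ q₂ hcop
      (fun a => St15.condG (q₁ * q₂) a ∧ St15.condD (q₁ * q₂) (d₁ * d₂) c a)
      (fun a => St15.condG q₁ a ∧ St15.condD q₁ d₁ c a)
      (fun a => St15.condG q₂ a ∧ St15.condD q₂ d₂ c a)
      (fun a => by
        have h1 := St15.condG_split q₁ q₂ hcop a
        have h2 := St15.condD_split q₁ q₂ d₁ d₂ hcop c hd₂q₁ hd₁q₂ a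
        tauto)
      (fun a' b' => St15.phase q₁ (B1 * St15.Phi M₁ M₂ u q₁ a' b'))
      (fun a' b' => St15.phase q₂ (A2 * St15.Phi M₁ M₂ u q₂ a' b')) hg]
    rw [t1 _ inferInstance (fun a => by
        have h1 := St15.condG_unit q₁ hB.unit a
        have h2 := St15.condD_unit q₁ d₁ c hB.unit a
        rw [hB.unit_spec] at h1 h2
        exact and_congr h1 h2),
      t2 _ inferInstance (fun a => by
        have h1 := St15.condG_unit q₂ hA.unit a
        have h2 := St15.condD_unit q₂ d₂ c hA.unit a
        rw [hA.unit_spec] at h1 h2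
        exact and_congr h1 h2)]
end
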